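/- Let X* be the complete rooted d-ary tree and G ≤ Aut(X*) a closed subgroup with level quotients G_n acting on the n-th level X_n. Suppose for some n ≥ 1 the kernel H_n of the restriction map G_n → G_{n-1} fails to act transitively on the set of children v* of some vertex v ∈ X_{n-1} that lies in a G-orbit. Then the fixed-point process Y_1, Y_2, … on G (with Haar probability measure and Y_n(g) = |Fix of g on level n|) is not a martingale: there exist values t_1, …, t_{n-1} with positive probability such that E[Y_n | Y_1 = t_1, …, Y_{n-1} = t_{n-1}] ≠ t_{n-1}. -/

import Mathlib

open scoped Classical

/-- Non-martingale criterion for groups acting on the `d`-ary rooted tree.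
The tree levels are `X_k = Fin k → Fin d` (words of length `k`), the group `Γ` (a
finite quotient of a closed subgroup `G ≤ Aut(X*)` through which all the relevant
level actions factor, with the uniform/Haar probability measure) acts on every level
through homomorphisms `φ k` compatible with truncation of words, and
`Y_k(g) = |Fix(φ k g)|` is the fixed-point process.  If the kernel of the restriction
`G_{n+1} → G_n` (elements acting trivially on level `n`) fails to act transitively on
the set of children `Fin.snoc v x` of some vertex `v` at level `n`, then the process
is not a martingale: there are values `t 0, …, t n` attained with positive probability
(the conditioning event is nonempty) such that the conditional expectation of
`Y_{n+1}` given `Y_k = t k` for `k ≤ n` differs from `t n`, i.e.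
`∑_{g ∈ E} Y_{n+1}(g) ≠ t n · |E|` where `E = {g : Y_k(g) = t k for k ≤ n}`. -/
theorem not_martingale_of_kernel_not_transitive (d n : ℕ) (hd : 2 ≤ d)
    {Γ : Type*} [Group Γ] [Fintype Γ]
    (φ : ∀ k : ℕ, Γ →* Equiv.Perm (Fin k → Fin d))
    (hcompat : ∀ (k : ℕ) (g : Γ) (w : Fin (k + 1) → Fin d),
      φ k g (w ∘ Fin.castSucc) = (φ (k + 1) g w) ∘ Fin.castSucc)
    (v : Fin n → Fin d)
    (hker : ¬ ∀ x y : Fin d, ∃ g : Γ, φ n g = 1 ∧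
      φ (n + 1) g (Fin.snoc v x) = Fin.snoc v y) :
    ∃ t : ℕ → ℕ,
      (Finset.univ.filter fun g : Γ =>
          ∀ k ∈ Finset.range (n + 1),
            Nat.card {w : Fin k → Fin d // φ k g w = w} = t k).Nonempty ∧
      ∑ g ∈ (Finset.univ.filter fun g : Γ =>
          ∀ k ∈ Finset.range (n + 1),
            Nat.card {w : Fin k → Fin d // φ k g w = w} = t k),
          Nat.card {w : Fin (n + 1) → Fin d // φ (n + 1) g w = w}
        ≠ t n * (Finset.univ.filter fun g : Γ =>
            ∀ k ∈ Finset.range (n + 1),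
              Nat.card {w : Fin k → Fin d // φ k g w = w} = t k).card := by
  classical
  have z : Fin d := ⟨0, by omega⟩
  have hsc : ∀ (k : ℕ) (u : Fin k → Fin d) (x : Fin d),
      (Fin.snoc u x : Fin (k+1) → Fin d) ∘ Fin.castSucc = u :=
    fun k u x => funext fun i => Fin.snoc_castSucc ..
  have hstep : ∀ (k : ℕ) (g : Γ), φ (k + 1) g = 1 → φ k g = 1 := by
    intro k g h
    refine Equiv.ext fun u => ?_
    have := hcompat k g (Fin.snoc u z)
    rw [h] at this
    simpa [hsc] using this
  have hdesc : ∀ (j k : ℕ) (g : Γ), k ≤ j → φ j g = 1 → φ k g = 1 := by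
    intro j
    induction j with
    | zero => intro k g hk h; rcases Nat.le_zero.mp hk; exact h
    | succ j ih =>
      intro k g hk h
      rcases Nat.eq_or_lt_of_le hk with rfl | hlt
      · exact h
      · exact ih k g (by omega) (hstep j g h)
  -- the key characterization of the conditioning event
  have key : ∀ g : Γ, (∀ k ∈ Finset.range (n + 1),
      Nat.card {w : Fin k → Fin d // φ k g w = w} = d ^ k) ↔ φ n g = 1 := by
    intro g
    constructor
    · intro h
      have hn := h n (Finset.self_mem_range_succ n)
      rw [Nat.card_eq_fintype_card, Fintype.card_subtype] at hn
      have huniv : (Finset.univ.filter fun w : Fin n → Fin d => φ n g w = w)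
          = Finset.univ := by
        apply Finset.eq_univ_of_card
        rw [hn]; simp
      refine Equiv.ext fun w => ?_
      have := Finset.mem_univ w
      rw [← huniv, Finset.mem_filter] at this
      simpa using this.2
    · intro h k hk
      have hk1 : φ k g = 1 := hdesc n k g (Nat.lt_succ_iff.mp (Finset.mem_range.mp hk)) h
      rw [hk1]
      simp [Nat.card_eq_fintype_card, Fintype.card_subtype]
  refine ⟨fun k => d ^ k, ?_, ?_⟩
  · exact ⟨1, by simp only [Finset.mem_filter, Finset.mem_univ, true_and, key, map_one]⟩
  -- rewrite the event as the kernel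
  have hEeq : (Finset.univ.filter fun g : Γ =>
      ∀ k ∈ Finset.range (n + 1),
        Nat.card {w : Fin k → Fin d // φ k g w = w} = d ^ k)
      = Finset.univ.filter fun g : Γ => g ∈ (φ n).ker := by
    ext g
    simp only [Finset.mem_filter, Finset.mem_univ, true_and, MonoidHom.mem_ker, key g]
  rw [hEeq]
  set H := (φ n).ker with hH
  set W := (Fin (n + 1) → Fin d) with hW
  letI : MulAction H W :=
    { smul := fun g w => φ (n + 1) (g : Γ) w
      one_smul := fun w => by
        show φ (n + 1) ((1 : H) : Γ) w = w
        simp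
      mul_smul := fun g h w => by
        show φ (n + 1) ((g * h : H) : Γ) w = φ (n+1) (g:Γ) (φ (n+1) (h:Γ) w)
        simp [Equiv.Perm.mul_apply] }
  have hsmul : ∀ (g : H) (w : W), g • w = φ (n + 1) (g : Γ) w := fun _ _ => rfl
  -- convert the sum to a sum over the kernel subgroup
  have hsum : ∑ g ∈ (Finset.univ.filter fun g : Γ => g ∈ H),
      Nat.card {w : Fin (n + 1) → Fin d // φ (n + 1) g w = w}
      = ∑ g : H, Fintype.card (MulAction.fixedBy W g) := by
    rw [Finset.sum_subtype (p := fun g : Γ => g ∈ H) (Finset.univ.filter fun g : Γ => g ∈ H)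
      (by intro x; simp) (fun g => Nat.card {w : Fin (n + 1) → Fin d // φ (n + 1) g w = w})]
    refine Finset.sum_congr rfl fun g _ => ?_
    rw [Nat.card_eq_fintype_card]
    exact Fintype.card_congr (Equiv.subtypeEquivRight fun w => Iff.rfl)
  rw [hsum, MulAction.sum_card_fixedBy_eq_card_orbits_mul_card_group H W]
  -- count the event
  have hcardE : (Finset.univ.filter fun g : Γ => g ∈ H).card = Fintype.card H :=
    (Fintype.card_subtype _).symm
  rw [hcardE]
  -- the number of orbits exceeds d ^ n
  set Ω := Quotient (MulAction.orbitRel H W) with hΩ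
  have hwd : ∀ a b : W, (MulAction.orbitRel H W).r a b → a ∘ Fin.castSucc = b ∘ Fin.castSucc := by
    intro a b hab
    obtain ⟨g, hg⟩ := hab
    have hker1 : φ n (g : Γ) = 1 := g.2
    have := hcompat n (g : Γ) b
    rw [hker1] at this
    rw [← hg]
    simp only [hsmul]
    simpa using this.symm
  let q : Ω → (Fin n → Fin d) := Quotient.lift (fun w : W => w ∘ Fin.castSucc) hwd
  have hqmk : ∀ w : W, q ⟦w⟧ = w ∘ Fin.castSucc := fun w => rfl
  have hqsurj : Function.Surjective q := by
    intro u
    exact ⟨⟦(Fin.snoc u z : W)⟧, by rw [hqmk, hsc]⟩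
  have hqninj : ¬ Function.Injective q := by
    push_neg at hker
    obtain ⟨x, y, hxy⟩ := hker
    intro hinj
    have : (⟦(Fin.snoc v x : W)⟧ : Ω) = ⟦(Fin.snoc v y : W)⟧ := by
      apply hinj
      rw [hqmk, hqmk, hsc, hsc]
    obtain ⟨g, hg⟩ := Quotient.exact this
    simp only [hsmul] at hg
    -- g • snoc v y = snoc v x ; use g⁻¹
    have h1 : φ n ((g⁻¹ : H) : Γ) = 1 := (g⁻¹).2
    have h2 : φ (n + 1) ((g⁻¹ : H) : Γ) (Fin.snoc v x) = Fin.snoc v y := by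
      rw [← hg]
      simp [Equiv.Perm.inv_def]
    exact hxy _ h1 h2
  have hΩcard : d ^ n < Fintype.card Ω := by
    have := Fintype.card_lt_of_surjective_not_injective q hqsurj hqninj
    simpa using this
  have hHpos : 0 < Fintype.card H := Fintype.card_pos
  exact Nat.ne_of_gt (by
    calc d ^ n * Fintype.card H < Fintype.card Ω * Fintype.card H :=
      (Nat.mul_lt_mul_right hHpos).mpr hΩcard)
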